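/- Let n ≥ 1 and let X be the full n-simplex, i.e., the simplicial complex consisting of all nonempty subsets of an (n+1)-element vertex set. For every 0 ≤ i ≤ n−1, the set of eigenvalues of the Laplace operator Δ acting on C^i(X) is exactly {0, n+1}. -/

import Mathlib

open Finset

open scoped Classical

variable {V : Type*}

/-- A (finite) simplicial complex on the vertex type `V`: a collection of nonempty
finite sets of vertices (the simplices) closed under passing to nonempty subsets. -/
def IsComplex [DecidableEq V] (K : Finset (Finset V)) : Prop :=
  (∀ s ∈ K, s.Nonempty) ∧ ∀ s ∈ K, ∀ t : Finset V, t ⊆ s → t.Nonempty → t ∈ K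

/-- `K` is `n`-dimensional and satisfies condition `(1_X)`: every simplex has dimension
at most `n` and is a face of some `n`-dimensional simplex (one of cardinality `n+1`). -/
def IsPureDim [DecidableEq V] (K : Finset (Finset V)) (n : ℕ) : Prop :=
  (∀ s ∈ K, s.card ≤ n + 1) ∧ ∀ s ∈ K, ∃ t ∈ K, s ⊆ t ∧ t.card = n + 1

/-- `wt K n s` : the number `w(s)` of `n`-dimensional simplices of `K` containing `s`. -/
noncomputable def wt [DecidableEq V] (K : Finset (Finset V)) (n : ℕ) (s : Finset V) : ℕ :=
  (K.filter fun t => s ⊆ t ∧ t.card = n + 1).card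

/-- An `m`-tuple of vertices is allowed when its entries are distinct and form a simplex
of `K`; i.e. it is an oriented `(m-1)`-simplex of `K`. -/
def Allowed [DecidableEq V] [Fintype V] (K : Finset (Finset V)) {m : ℕ}
    (v : Fin m → V) : Prop :=
  Function.Injective v ∧ Finset.image v Finset.univ ∈ K

/-- `f` is an `(m-1)`-cochain on `K`: a real-valued alternating function on oriented
`(m-1)`-simplices of `K` (realized as a function on all `m`-tuples of vertices which is
alternating and vanishes on tuples which are not oriented simplices of `K`). -/
def IsCochain [DecidableEq V] [Fintype V] (K : Finset (Finset V)) (m : ℕ)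
    (f : (Fin m → V) → ℝ) : Prop :=
  (∀ (σ : Equiv.Perm (Fin m)) (v : Fin m → V),
      f (v ∘ σ) = ((Equiv.Perm.sign σ : ℤ) : ℝ) * f v) ∧
  ∀ v : Fin m → V, ¬ Allowed K v → f v = 0

/-- The inner product `(f,g) = ∑_s w(s)·f(s)·g(s)` on `(m-1)`-cochains, the sum being over
the unoriented `(m-1)`-simplices `s` of `K` (each with an arbitrarily chosen orientation);
summing over all `m`-tuples counts each simplex `m!` times, whence the normalization. -/
noncomputable def innerC [DecidableEq V] [Fintype V] (K : Finset (Finset V)) (n m : ℕ)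
    (f g : (Fin m → V) → ℝ) : ℝ :=
  (∑ v : Fin m → V, (wt K n (Finset.image v Finset.univ) : ℝ) * f v * g v) /
    (Nat.factorial m : ℝ)

/-- The coboundary `d : C^{m-1}(K) → C^m(K)`. -/
noncomputable def cobound [DecidableEq V] [Fintype V] (K : Finset (Finset V)) {m : ℕ}
    (f : (Fin m → V) → ℝ) : (Fin (m + 1) → V) → ℝ :=
  fun v => if Allowed K v then
    ∑ j : Fin (m + 1), (-1 : ℝ) ^ (j : ℕ) * f (v ∘ Fin.succAbove j)
  else 0

/-- The operator `δ : C^m(K) → C^{m-1}(K)`,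
`(δf)(s) = ∑_x (w([x,s])/w(s))·f([x,s])`, the sum being over the vertices `x`
such that `[x,s]` is an oriented simplex of `K`. -/
noncomputable def codiff [DecidableEq V] [Fintype V] (K : Finset (Finset V)) (n : ℕ) {m : ℕ}
    (f : (Fin (m + 1) → V) → ℝ) : (Fin m → V) → ℝ :=
  fun s => ∑ x : V,
    if Allowed K (Fin.cons x s) then
      ((wt K n (Finset.image (Fin.cons x s) Finset.univ) : ℝ) /
          (wt K n (Finset.image s Finset.univ) : ℝ)) * f (Fin.cons x s)
    else 0

/-- The Laplace operator `Δ = δ ∘ d` on `(m-1)`-cochains. -/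
noncomputable def lap [DecidableEq V] [Fintype V] (K : Finset (Finset V)) (n : ℕ) {m : ℕ}
    (f : (Fin m → V) → ℝ) : (Fin m → V) → ℝ :=
  codiff K n (cobound K f)

/-- `ρ_v : C^{m-1}(K) → C^{m-1}(K)`: `(ρ_v f)(s) = f(s)` if `v` is a vertex of `s`,
and `0` otherwise. -/
noncomputable def rho [DecidableEq V] {m : ℕ} (v : V) (f : (Fin m → V) → ℝ) :
    (Fin m → V) → ℝ :=
  fun s => if ∃ j, s j = v then f s else 0

/-- The vertices of `K`. -/
noncomputable def verts [DecidableEq V] [Fintype V] (K : Finset (Finset V)) : Finset V :=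
  Finset.univ.filter fun v => {v} ∈ K

/-- The link `Lk(v)` of a vertex `v`: all simplices `s` of `K` with `v ∉ s` and
`s ∪ {v} ∈ K`. -/
noncomputable def linkK [DecidableEq V] (K : Finset (Finset V)) (v : V) :
    Finset (Finset V) :=
  K.filter fun s => v ∉ s ∧ insert v s ∈ K

/-- `τ_v : C^{m}(K) → C^{m-1}(Lk(v))`: `(τ_v f)(s) = f([v,s])` for `s` an oriented
simplex of the link `Lk(v)`. -/
noncomputable def tau [DecidableEq V] [Fintype V] (K : Finset (Finset V)) (v : V) {m : ℕ}
    (f : (Fin (m + 1) → V) → ℝ) : (Fin m → V) → ℝ :=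
  fun s => if Allowed (linkK K v) s then f (Fin.cons v s) else 0

/-- `c` is an eigenvalue of the Laplace operator acting on `(m-1)`-cochains of `K`. -/
def IsEigen [DecidableEq V] [Fintype V] (K : Finset (Finset V)) (n m : ℕ) (c : ℝ) : Prop :=
  ∃ f : (Fin m → V) → ℝ, f ≠ 0 ∧ IsCochain K m f ∧ lap K n f = c • f


section FullSimplex

variable [Fintype V] [DecidableEq V]

/-- The full simplex complex. -/
private def fullC (V : Type*) [Fintype V] [DecidableEq V] : Finset (Finset V) :=
  Finset.univ.filter fun s : Finset V => s.Nonempty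

lemma mem_fullC {s : Finset V} : s ∈ fullC V ↔ s.Nonempty := by
  simp [fullC]

lemma wt_fullC (n : ℕ) (hcard : Fintype.card V = n + 1) (s : Finset V) :
    wt (fullC V) n s = 1 := by
  have huniv : ((fullC V).filter fun t => s ⊆ t ∧ t.card = n + 1) = {Finset.univ} := by
    ext t
    simp only [Finset.mem_filter, Finset.mem_singleton, mem_fullC]
    constructor
    · rintro ⟨-, -, hc⟩
      exact Finset.eq_univ_of_card t (by rw [hc, hcard])
    · rintro rfl
      refine ⟨Finset.univ_nonempty_iff.2 ?_, Finset.subset_univ _, by rw [Finset.card_univ, hcard]⟩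
      rw [← Fintype.card_pos_iff, hcard]; omega
  rw [wt, huniv, Finset.card_singleton]

lemma allowed_fullC {m : ℕ} (v : Fin (m + 1) → V) :
    Allowed (fullC V) v ↔ Function.Injective v := by
  unfold Allowed
  simp only [mem_fullC, and_iff_left_iff_imp]
  intro _
  exact (Finset.image_nonempty).2 Finset.univ_nonempty

lemma allowed_comp_perm {m : ℕ} {v : Fin m → V} (σ : Equiv.Perm (Fin m)) :
    Allowed (fullC V) (v ∘ σ) ↔ Allowed (fullC V) v := by
  unfold Allowed
  have h1 : Function.Injective (v ∘ σ) ↔ Function.Injective v := by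
    constructor
    · intro h
      have := h.comp σ.symm.injective
      simpa [Function.comp_def] using this
    · exact fun h => h.comp σ.injective
  have h2 : Finset.image (v ∘ σ) Finset.univ = Finset.image v Finset.univ := by
    rw [← Finset.image_image]
    congr 1
    exact Finset.image_univ_equiv σ
  rw [h1, h2]

lemma cobound_apply {m : ℕ} (f : (Fin m → V) → ℝ) (v : Fin (m + 1) → V)
    (hv : Function.Injective v) :
    cobound (fullC V) f v = ∑ j : Fin (m + 1), (-1 : ℝ) ^ (j : ℕ) * f (v ∘ Fin.succAbove j) := by
  rw [cobound, if_pos ((allowed_fullC v).2 hv)]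

lemma cobound_not_inj {m : ℕ} (f : (Fin m → V) → ℝ) (v : Fin (m + 1) → V)
    (hv : ¬ Function.Injective v) :
    cobound (fullC V) f v = 0 := by
  rw [cobound, if_neg (fun h => hv ((allowed_fullC v).1 h))]

lemma codiff_apply (n : ℕ) (hcard : Fintype.card V = n + 1) {m : ℕ}
    (f : (Fin (m + 1) → V) → ℝ) (s : Fin m → V) :
    codiff (fullC V) n f s =
      ∑ x : V, if Function.Injective (Fin.cons x s) then f (Fin.cons x s) else 0 := by
  rw [codiff]
  refine Finset.sum_congr rfl fun x _ => ?_
  rw [wt_fullC n hcard, wt_fullC n hcard]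
  by_cases h : Function.Injective (Fin.cons x s)
  · rw [if_pos ((allowed_fullC _).2 h), if_pos h]
    norm_num
  · rw [if_neg (fun hh => h ((allowed_fullC _).1 hh)), if_neg h]

lemma codiff_zero (K : Finset (Finset V)) (n : ℕ) {m : ℕ} :
    codiff K n (fun _ : Fin (m + 1) → V => (0:ℝ)) = fun _ => 0 := by
  funext s
  rw [codiff]
  simp

lemma cobound_zero (K : Finset (Finset V)) {m : ℕ} :
    cobound K (fun _ : Fin m → V => (0:ℝ)) = fun _ => 0 := by
  funext v
  rw [cobound]
  simp

end FullSimplex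
section DD

lemma val_succAbove {m : ℕ} (p : Fin (m + 1)) (x : Fin m) :
    ((p.succAbove x : Fin (m + 1)) : ℕ) = if (x : ℕ) < (p : ℕ) then (x : ℕ) else (x : ℕ) + 1 := by
  rw [Fin.succAbove]
  split_ifs with h1 h2 h2
  · rfl
  · exact absurd (by simpa [Fin.lt_def] using h1) h2
  · exact absurd (by simp [Fin.lt_def, h2]) h1
  · rfl

lemma succAbove_succAbove_val {m : ℕ} (j j' : Fin (m + 2)) (k k' : Fin (m + 1)) (x : Fin m)
    (h : ((j' : ℕ) = (k : ℕ) + 1 ∧ (k' : ℕ) = (j : ℕ) ∧ (j : ℕ) ≤ (k : ℕ)) ∨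
      ((j : ℕ) = (k' : ℕ) + 1 ∧ (k : ℕ) = (j' : ℕ) ∧ (j' : ℕ) ≤ (k' : ℕ))) :
    j.succAbove (k.succAbove x) = j'.succAbove (k'.succAbove x) := by
  apply Fin.ext
  rw [val_succAbove, val_succAbove, val_succAbove, val_succAbove]
  split_ifs <;> omega

lemma pow_neg_one_flip {a b c d : ℕ} (h : (c + d) % 2 = (a + b + 1) % 2) :
    (-1 : ℝ) ^ c * (-1 : ℝ) ^ d = -((-1 : ℝ) ^ a * (-1 : ℝ) ^ b) := by
  have key : ∀ e : ℕ, (-1 : ℝ) ^ e = (-1 : ℝ) ^ (e % 2) := by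
    intro e
    conv_lhs => rw [← Nat.mod_add_div e 2]
    rw [pow_add, pow_mul]
    norm_num
  rw [← pow_add, ← pow_add, key (c + d), key (a + b), h]
  rcases Nat.mod_two_eq_zero_or_one (a + b) with he | he
  · rw [show (a + b + 1) % 2 = 1 by omega, he]; norm_num
  · rw [show (a + b + 1) % 2 = 0 by omega, he]; norm_num

private def ddInv {m : ℕ} (p : Fin (m + 2) × Fin (m + 1)) : Fin (m + 2) × Fin (m + 1) :=
  if h : (p.1 : ℕ) ≤ (p.2 : ℕ) then
    (p.2.succ, ⟨(p.1 : ℕ), by omega⟩)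
  else
    (⟨(p.2 : ℕ), by omega⟩, ⟨(p.1 : ℕ) - 1, by
      have := p.1.isLt
      omega⟩)

lemma ddInv_fst {m : ℕ} (p : Fin (m + 2) × Fin (m + 1)) :
    ((ddInv p).1 : ℕ) = if (p.1 : ℕ) ≤ (p.2 : ℕ) then (p.2 : ℕ) + 1 else (p.2 : ℕ) := by
  rw [ddInv]
  split_ifs <;> simp

lemma ddInv_snd {m : ℕ} (p : Fin (m + 2) × Fin (m + 1)) :
    ((ddInv p).2 : ℕ) = if (p.1 : ℕ) ≤ (p.2 : ℕ) then (p.1 : ℕ) else (p.1 : ℕ) - 1 := by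
  rw [ddInv]
  split_ifs <;> simp

variable [Fintype V] [DecidableEq V]

lemma dd_zero {m : ℕ} (f : (Fin m → V) → ℝ) :
    cobound (fullC V) (cobound (fullC V) f) = fun _ => 0 := by
  funext v
  by_cases hv : Function.Injective v
  · rw [cobound_apply _ v hv]
    have hface : ∀ j : Fin (m + 2), Function.Injective (v ∘ Fin.succAbove j) :=
      fun j => hv.comp (Fin.succAbove_right_injective)
    have hc : ∀ j : Fin (m + 2), cobound (fullC V) f (v ∘ Fin.succAbove j) =
        ∑ k : Fin (m + 1), (-1 : ℝ) ^ (k : ℕ) * f ((v ∘ Fin.succAbove j) ∘ Fin.succAbove k) :=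
      fun j => cobound_apply f _ (hface j)
    simp only [hc, Finset.mul_sum]
    rw [← Finset.sum_product']
    set F : Fin (m + 2) × Fin (m + 1) → ℝ := fun p =>
      (-1 : ℝ) ^ ((p.1 : Fin (m + 2)) : ℕ) *
        ((-1 : ℝ) ^ ((p.2 : Fin (m + 1)) : ℕ) *
          f ((v ∘ Fin.succAbove p.1) ∘ Fin.succAbove p.2)) with hF
    show ∑ p ∈ Finset.univ ×ˢ Finset.univ, F p = 0
    have key : ∀ p : Fin (m + 2) × Fin (m + 1), F p + F (ddInv p) = 0 := by
      intro p
      have harg : (v ∘ Fin.succAbove (ddInv p).1) ∘ Fin.succAbove (ddInv p).2 =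
          (v ∘ Fin.succAbove p.1) ∘ Fin.succAbove p.2 := by
        funext x
        simp only [Function.comp_apply]
        refine congrArg v (succAbove_succAbove_val _ _ _ _ x ?_)
        have h1 := ddInv_fst p
        have h2 := ddInv_snd p
        have := p.1.isLt
        have := p.2.isLt
        by_cases h : (p.1 : ℕ) ≤ (p.2 : ℕ)
        · right; rw [if_pos h] at h1; rw [if_pos h] at h2; omega
        · left; rw [if_neg h] at h1; rw [if_neg h] at h2; omega
      have hs : (-1 : ℝ) ^ (((ddInv p).1 : Fin (m + 2)) : ℕ) *
          (-1 : ℝ) ^ (((ddInv p).2 : Fin (m + 1)) : ℕ) =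
          -((-1 : ℝ) ^ ((p.1 : Fin (m + 2)) : ℕ) * (-1 : ℝ) ^ ((p.2 : Fin (m + 1)) : ℕ)) := by
        apply pow_neg_one_flip
        have h1 := ddInv_fst p
        have h2 := ddInv_snd p
        have := p.1.isLt
        by_cases h : (p.1 : ℕ) ≤ (p.2 : ℕ)
        · rw [if_pos h] at h1; rw [if_pos h] at h2; omega
        · rw [if_neg h] at h1; rw [if_neg h] at h2; omega
      rw [hF]
      dsimp only
      rw [harg]
      linear_combination f ((v ∘ Fin.succAbove p.1) ∘ Fin.succAbove p.2) * hs
    have hne : ∀ p : Fin (m + 2) × Fin (m + 1), ddInv p ≠ p := by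
      intro p hcon
      have h1 := ddInv_fst p
      rw [hcon] at h1
      split_ifs at h1 <;> omega
    have hinv : ∀ p : Fin (m + 2) × Fin (m + 1), ddInv (ddInv p) = p := by
      intro p
      have h1 := ddInv_fst p
      have h2 := ddInv_snd p
      have h3 := ddInv_fst (ddInv p)
      have h4 := ddInv_snd (ddInv p)
      have e1 := p.1.isLt
      have e2 := p.2.isLt
      rw [h1, h2] at h3 h4
      refine Prod.ext (Fin.ext ?_) (Fin.ext ?_)
      · rw [h3]; split_ifs at h1 h2 ⊢ <;> omega
      · rw [h4]; split_ifs at h1 h2 ⊢ <;> omega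
    exact Finset.sum_involution (fun p _ => ddInv p) (fun p _ => key p)
      (fun p _ _ => hne p) (fun p _ => Finset.mem_product.mpr ⟨Finset.mem_univ _, Finset.mem_univ _⟩) (fun p _ => hinv p)
  · rw [cobound_not_inj _ v hv]

end DD
section Hodge

variable [Fintype V] [DecidableEq V]

lemma cons_inj_iff {p : ℕ} {t : Fin p → V} (ht : Function.Injective t) (x : V) :
    Function.Injective (Fin.cons x t) ↔ x ∉ Finset.image t Finset.univ := by
  simp only [Fin.cons_injective_iff, ht, and_true]
  simp [Set.mem_range, Finset.mem_image]

lemma image_face {m : ℕ} {s : Fin (m + 1) → V} (hs : Function.Injective s) (j : Fin (m + 1)) :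
    Finset.image (s ∘ Fin.succAbove j) Finset.univ =
      (Finset.image s Finset.univ).erase (s j) := by
  rw [← Finset.image_image]
  have h1 : Finset.image (Fin.succAbove j) Finset.univ = Finset.univ.erase j := by
    ext k
    simp only [Finset.mem_image, Finset.mem_univ, true_and, Finset.mem_erase, and_true]
    constructor
    · rintro ⟨z, rfl⟩; exact Fin.succAbove_ne j z
    · intro hk; exact Fin.exists_succAbove_eq hk
  rw [h1, Finset.image_erase hs]

lemma cons_face_eq_cycle {m : ℕ} (s : Fin (m + 1) → V) (j : Fin (m + 1)) :
    Fin.cons (s j) (s ∘ Fin.succAbove j) = s ∘ ⇑((Fin.cycleRange j).symm) := by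
  funext l
  refine Fin.cases ?_ ?_ l
  · simp [Fin.cycleRange_symm_zero]
  · intro r
    simp [Fin.cycleRange_symm_succ]

lemma cons_comp_succAbove_zero {q : ℕ} (x : V) (s : Fin q → V) :
    (Fin.cons x s : Fin (q + 1) → V) ∘ Fin.succAbove (0 : Fin (q + 1)) = s := by
  funext k
  simp [Fin.succAbove_zero]

lemma cons_comp_succAbove_succ {p : ℕ} (x : V) (s : Fin (p + 1) → V) (k : Fin (p + 1)) :
    (Fin.cons x s : Fin (p + 2) → V) ∘ Fin.succAbove (k.succ) =
      Fin.cons x (s ∘ Fin.succAbove k) := by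
  funext l
  refine Fin.cases ?_ ?_ l
  · simp [Fin.succ_succAbove_zero]
  · intro r
    simp [Fin.succ_succAbove_succ]

lemma sign_cast_cycleRange {m : ℕ} (j : Fin (m + 1)) :
    (((Equiv.Perm.sign ((Fin.cycleRange j).symm) : ℤˣ) : ℤ) : ℝ) = (-1 : ℝ) ^ (j : ℕ) := by
  rw [Equiv.Perm.sign_symm, Fin.sign_cycleRange]
  push_cast
  norm_num

lemma hodge (n : ℕ) (hcard : Fintype.card V = n + 1) {m : ℕ}
    (g : (Fin (m + 1) → V) → ℝ) (hg : IsCochain (fullC V) (m + 1) g) (s : Fin (m + 1) → V) :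
    cobound (fullC V) (codiff (fullC V) n g) s + codiff (fullC V) n (cobound (fullC V) g) s
      = ((n : ℝ) + 1) * g s := by
  by_cases hs : Function.Injective s
  case neg =>
    have hg0 : g s = 0 := hg.2 s (fun h => hs ((allowed_fullC s).1 h))
    rw [cobound_not_inj _ s hs, hg0, codiff_apply n hcard]
    have hnx : ∀ x : V, ¬ Function.Injective (Fin.cons x s) := by
      intro x hx
      exact hs (Fin.cons_injective_iff.1 hx).2
    simp [hnx]
  case pos =>
  classical
  set B : Finset V := Finset.univ \ Finset.image s Finset.univ with hB
  have hface : ∀ j : Fin (m + 1), Function.Injective (s ∘ Fin.succAbove j) :=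
    fun j => hs.comp Fin.succAbove_right_injective
  have hcardim : (Finset.image s Finset.univ).card = m + 1 := by
    rw [Finset.card_image_of_injective _ hs, Finset.card_univ, Fintype.card_fin]
  have hmn : m + 1 ≤ n + 1 := by
    have := Fintype.card_le_of_injective s hs
    rwa [Fintype.card_fin, hcard] at this
  have hcardB : (B.card : ℝ) = (n : ℝ) - m := by
    have h1 : B.card = n - m := by
      rw [hB, Finset.card_sdiff_of_subset (Finset.subset_univ _), Finset.card_univ, hcard, hcardim]
      omega
    rw [h1, Nat.cast_sub (by omega)]
  have hfilter1 : ∀ j : Fin (m + 1),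
      Finset.univ.filter
        (fun x : V => Function.Injective (Fin.cons x (s ∘ Fin.succAbove j)))
        = insert (s j) B := by
    intro j
    ext x
    simp only [Finset.mem_filter, Finset.mem_univ, true_and, Finset.mem_insert, hB,
      Finset.mem_sdiff, cons_inj_iff (hface j), image_face hs, Finset.mem_erase]
    tauto
  have hsj_notB : ∀ j : Fin (m + 1), s j ∉ B := by
    intro j
    simp only [hB, Finset.mem_sdiff, Finset.mem_univ, true_and, not_and, not_not]
    first
      | exact Finset.mem_image_of_mem s (Finset.mem_univ j)
      | (intro; exact Finset.mem_image_of_mem s (Finset.mem_univ j))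
  have hterm1 : cobound (fullC V) (codiff (fullC V) n g) s
      = ((m : ℝ) + 1) * g s
        + ∑ j : Fin (m + 1), (-1 : ℝ) ^ (j : ℕ)
            * ∑ x ∈ B, g (Fin.cons x (s ∘ Fin.succAbove j)) := by
    rw [cobound_apply _ s hs]
    have hstep : ∀ j : Fin (m + 1),
        codiff (fullC V) n g (s ∘ Fin.succAbove j)
          = (-1 : ℝ) ^ (j : ℕ) * g s + ∑ x ∈ B, g (Fin.cons x (s ∘ Fin.succAbove j)) := by
      intro j
      rw [codiff_apply n hcard, ← Finset.sum_filter, hfilter1 j,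
        Finset.sum_insert (hsj_notB j)]
      congr 1
      rw [cons_face_eq_cycle s j, hg.1 ((Fin.cycleRange j).symm) s, sign_cast_cycleRange]
    simp only [hstep, mul_add]
    rw [Finset.sum_add_distrib]
    congr 1
    have hone : ∀ j : Fin (m + 1),
        (-1 : ℝ) ^ (j : ℕ) * ((-1 : ℝ) ^ (j : ℕ) * g s) = g s := by
      intro j
      rw [← mul_assoc, ← mul_pow]
      norm_num
    rw [Finset.sum_congr rfl (fun j _ => hone j), Finset.sum_const, Finset.card_univ,
      Fintype.card_fin, nsmul_eq_mul]
    push_cast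
    ring
  have hfilter2 : Finset.univ.filter (fun x : V => Function.Injective (Fin.cons x s)) = B := by
    ext x
    simp [cons_inj_iff hs, hB]
  have hterm2 : codiff (fullC V) n (cobound (fullC V) g) s
      = ((n : ℝ) - m) * g s
        + ∑ x ∈ B, ∑ k : Fin (m + 1),
            (-((-1 : ℝ) ^ (k : ℕ))) * g (Fin.cons x (s ∘ Fin.succAbove k)) := by
    rw [codiff_apply n hcard, ← Finset.sum_filter, hfilter2]
    have hstep : ∀ x ∈ B, cobound (fullC V) g (Fin.cons x s)
        = g s + ∑ k : Fin (m + 1),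
            (-((-1 : ℝ) ^ (k : ℕ))) * g (Fin.cons x (s ∘ Fin.succAbove k)) := by
      intro x hx
      have hxB : x ∉ Finset.image s Finset.univ := by
        simp only [hB, Finset.mem_sdiff, Finset.mem_univ, true_and] at hx
        exact hx
      have hxinj : Function.Injective (Fin.cons x s) := (cons_inj_iff hs x).2 hxB
      rw [cobound_apply _ _ hxinj, Fin.sum_univ_succ]
      congr 1
      · rw [cons_comp_succAbove_zero]
        simp
      · refine Finset.sum_congr rfl fun k _ => ?_
        rw [cons_comp_succAbove_succ, Fin.val_succ, pow_succ]
        ring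
    rw [Finset.sum_congr rfl hstep, Finset.sum_add_distrib]
    congr 1
    rw [Finset.sum_const, nsmul_eq_mul, hcardB]
  rw [hterm1, hterm2]
  have hswap : ∑ x ∈ B, ∑ k : Fin (m + 1),
      (-((-1 : ℝ) ^ (k : ℕ))) * g (Fin.cons x (s ∘ Fin.succAbove k))
      = ∑ k : Fin (m + 1), ∑ x ∈ B,
          (-((-1 : ℝ) ^ (k : ℕ))) * g (Fin.cons x (s ∘ Fin.succAbove k)) :=
    Finset.sum_comm
  have hcancel : ∑ j : Fin (m + 1), (-1 : ℝ) ^ (j : ℕ)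
        * ∑ x ∈ B, g (Fin.cons x (s ∘ Fin.succAbove j))
      + ∑ x ∈ B, ∑ k : Fin (m + 1),
          (-((-1 : ℝ) ^ (k : ℕ))) * g (Fin.cons x (s ∘ Fin.succAbove k)) = 0 := by
    rw [hswap, ← Finset.sum_add_distrib]
    apply Finset.sum_eq_zero
    intro j _
    rw [Finset.mul_sum, ← Finset.sum_add_distrib]
    apply Finset.sum_eq_zero
    intro x _
    ring
  linear_combination hcancel

end Hodge
section Alt

variable [Fintype V] [DecidableEq V]

/-- Antisymmetrization. -/
private noncomputable def altC {m : ℕ} (φ : (Fin m → V) → ℝ) : (Fin m → V) → ℝ :=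
  fun v => ∑ σ : Equiv.Perm (Fin m), ((Equiv.Perm.sign σ : ℤ) : ℝ) * φ (v ∘ σ)

/-- An alternating function. -/
private def Alternating {m : ℕ} (f : (Fin m → V) → ℝ) : Prop :=
  ∀ (σ : Equiv.Perm (Fin m)) (v : Fin m → V),
    f (v ∘ σ) = ((Equiv.Perm.sign σ : ℤ) : ℝ) * f v

lemma sign_sq {m : ℕ} (τ : Equiv.Perm (Fin m)) :
    ((Equiv.Perm.sign τ : ℤ) : ℝ) * ((Equiv.Perm.sign τ : ℤ) : ℝ) = 1 := by
  rcases Int.units_eq_one_or (Equiv.Perm.sign τ) with h | h <;> rw [h] <;> norm_num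

lemma sign_mul_cast {m : ℕ} (τ σ : Equiv.Perm (Fin m)) :
    ((Equiv.Perm.sign (τ * σ) : ℤ) : ℝ)
      = ((Equiv.Perm.sign τ : ℤ) : ℝ) * ((Equiv.Perm.sign σ : ℤ) : ℝ) := by
  rw [Equiv.Perm.sign_mul]
  push_cast
  ring

lemma altC_alternating {m : ℕ} (φ : (Fin m → V) → ℝ) : Alternating (altC φ) := by
  intro τ v
  unfold altC
  have h1 : ∀ σ : Equiv.Perm (Fin m),
      ((Equiv.Perm.sign σ : ℤ) : ℝ) * φ ((v ∘ ⇑τ) ∘ ⇑σ)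
        = ((Equiv.Perm.sign τ : ℤ) : ℝ) *
            (((Equiv.Perm.sign (τ * σ) : ℤ) : ℝ) * φ (v ∘ ⇑(τ * σ))) := by
    intro σ
    rw [Equiv.Perm.coe_mul, sign_mul_cast]
    have : (v ∘ ⇑τ) ∘ ⇑σ = v ∘ (⇑τ ∘ ⇑σ) := rfl
    rw [this, ← mul_assoc, ← mul_assoc, sign_sq, one_mul]
  rw [Finset.sum_congr rfl (fun σ _ => h1 σ), ← Finset.mul_sum]
  congr 1
  exact Equiv.sum_comp (Equiv.mulLeft τ)
    (fun ρ => ((Equiv.Perm.sign ρ : ℤ) : ℝ) * φ (v ∘ ⇑ρ))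

/-- The basic cochain attached to an ordered tuple. -/
private noncomputable def basicC {m : ℕ} (u : Fin m → V) : (Fin m → V) → ℝ :=
  altC (fun w => if w = u then 1 else 0)

lemma basicC_self {m : ℕ} {u : Fin m → V} (hu : Function.Injective u) : basicC u u = 1 := by
  unfold basicC altC
  rw [Finset.sum_eq_single 1]
  · simp
  · intro σ _ hσ
    have hne : ¬ (u ∘ ⇑σ = u) := fun hc => hσ (Equiv.ext fun x => by
      have := hu (congrFun hc x)
      simpa using this)
    dsimp only
    rw [if_neg hne, mul_zero]
  · intro h
    exact absurd (Finset.mem_univ 1) h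

lemma basicC_eq_zero {m : ℕ} {u v : Fin m → V} (h : ∀ σ : Equiv.Perm (Fin m), v ∘ ⇑σ ≠ u) :
    basicC u v = 0 := by
  unfold basicC altC
  apply Finset.sum_eq_zero
  intro σ _
  dsimp only
  rw [if_neg (h σ), mul_zero]

lemma basicC_isCochain {m : ℕ} (u : Fin (m + 1) → V) (hu : Function.Injective u) :
    IsCochain (fullC V) (m + 1) (basicC u) := by
  constructor
  · exact fun σ v => altC_alternating _ σ v
  · intro v hv
    apply basicC_eq_zero
    intro σ hc
    apply hv
    have hveq : v = u ∘ ⇑σ.symm := by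
      funext x
      have := congrFun hc (σ.symm x)
      simpa using this
    rw [allowed_fullC]
    rw [hveq]
    exact hu.comp σ.symm.injective

end Alt

section Preserve

variable [Fintype V] [DecidableEq V]

lemma swap_zero_comp_succ {m : ℕ} (v : Fin (m + 1) → V) (p : Fin (m + 1)) (hp : p ≠ 0) :
    v ∘ ⇑(Equiv.swap (0 : Fin (m + 1)) p) ∘ Fin.succ
      = (v ∘ Fin.succAbove p) ∘ ⇑(Fin.cycleRange (p.pred hp)) := by
  funext k
  simp only [Function.comp_apply]
  congr 1
  conv_lhs => rw [← Fin.succ_pred p hp]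
  rw [← Fin.succAbove_cycleRange (p.pred hp) k, Fin.succ_pred]

lemma cobound_symmetrize {m : ℕ} (f : (Fin m → V) → ℝ) (hf : Alternating f)
    (v : Fin (m + 1) → V) :
    (m.factorial : ℝ) * ∑ j : Fin (m + 1), (-1 : ℝ) ^ (j : ℕ) * f (v ∘ Fin.succAbove j)
      = ∑ π : Equiv.Perm (Fin (m + 1)),
          ((Equiv.Perm.sign π : ℤ) : ℝ) * f (v ∘ ⇑π ∘ Fin.succ) := by
  rw [← Equiv.sum_comp
      (Equiv.Perm.decomposeFin.symm : Fin (m + 1) × Equiv.Perm (Fin m) ≃ _)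
      (fun π => ((Equiv.Perm.sign π : ℤ) : ℝ) * f (v ∘ ⇑π ∘ Fin.succ))]
  rw [Fintype.sum_prod_type]
  have hterm : ∀ (p : Fin (m + 1)) (e : Equiv.Perm (Fin m)),
      ((Equiv.Perm.sign (Equiv.Perm.decomposeFin.symm (p, e)) : ℤ) : ℝ) *
          f (v ∘ ⇑(Equiv.Perm.decomposeFin.symm (p, e)) ∘ Fin.succ)
        = (if p = 0 then (1 : ℝ) else -1) * f (v ∘ ⇑(Equiv.swap 0 p) ∘ Fin.succ) := by
    intro p e
    have harg : v ∘ ⇑(Equiv.Perm.decomposeFin.symm (p, e)) ∘ Fin.succ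
        = (v ∘ ⇑(Equiv.swap 0 p) ∘ Fin.succ) ∘ ⇑e := by
      funext k
      simp only [Function.comp_apply, Equiv.Perm.decomposeFin_symm_apply_succ]
    have hsgn : ((Equiv.Perm.sign (Equiv.Perm.decomposeFin.symm (p, e)) : ℤ) : ℝ)
        = (if p = 0 then (1 : ℝ) else -1) * ((Equiv.Perm.sign e : ℤ) : ℝ) := by
      rw [Equiv.Perm.decomposeFin.symm_sign]
      split_ifs <;> push_cast <;> ring
    rw [harg, hf e, hsgn]
    rcases Int.units_eq_one_or (Equiv.Perm.sign e) with h | h <;> rw [h] <;> push_cast <;> ring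
  calc (m.factorial : ℝ) * ∑ j : Fin (m + 1), (-1 : ℝ) ^ (j : ℕ) * f (v ∘ Fin.succAbove j)
      = ∑ p : Fin (m + 1), (m.factorial : ℝ) *
          ((if p = 0 then (1 : ℝ) else -1) * f (v ∘ ⇑(Equiv.swap 0 p) ∘ Fin.succ)) := by
        rw [← Finset.mul_sum]
        congr 1
        refine Finset.sum_congr rfl fun p _ => ?_
        by_cases hp : p = 0
        · subst hp
          rw [if_pos rfl, Equiv.swap_self]
          have harg : v ∘ ⇑(Equiv.refl (Fin (m + 1))) ∘ Fin.succ
              = v ∘ Fin.succAbove (0 : Fin (m + 1)) := by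
            funext k
            simp [Fin.succAbove_zero]
          rw [harg]
          simp
        · rw [if_neg hp, swap_zero_comp_succ v p hp, hf (Fin.cycleRange (p.pred hp)),
            Fin.sign_cycleRange]
          have hc : (((((-1 : ℤˣ) ^ ((p.pred hp : Fin m) : ℕ)) : ℤˣ) : ℤ) : ℝ)
              = (-1 : ℝ) ^ (((p.pred hp : Fin m)) : ℕ) := by
            push_cast
            norm_num
          rw [hc, Fin.coe_pred]
          have hp1 : 1 ≤ (p : ℕ) := by
            rcases Nat.eq_zero_or_pos (p : ℕ) with h | h
            · exact absurd (Fin.ext h) hp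
            · omega
          obtain ⟨a, ha⟩ : ∃ a, (p : ℕ) = a + 1 := ⟨(p : ℕ) - 1, by omega⟩
          rw [ha, Nat.add_sub_cancel, pow_succ]
          ring
    _ = ∑ p : Fin (m + 1), ∑ e : Equiv.Perm (Fin m),
          ((Equiv.Perm.sign (Equiv.Perm.decomposeFin.symm (p, e)) : ℤ) : ℝ) *
            f (v ∘ ⇑(Equiv.Perm.decomposeFin.symm (p, e)) ∘ Fin.succ) := by
        refine Finset.sum_congr rfl fun p _ => ?_
        rw [Finset.sum_congr rfl (fun e _ => hterm p e), Finset.sum_const, Finset.card_univ,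
          Fintype.card_perm, Fintype.card_fin, nsmul_eq_mul]
        try ring

lemma cobound_alternating {m : ℕ} (f : (Fin m → V) → ℝ) (hf : Alternating f) :
    Alternating (cobound (fullC V) f) := by
  intro σ v
  by_cases hv : Function.Injective v
  · have hvσ : Function.Injective (v ∘ ⇑σ) := hv.comp σ.injective
    rw [cobound_apply _ _ hvσ, cobound_apply _ _ hv]
    have hfac : (m.factorial : ℝ) ≠ 0 := Nat.cast_ne_zero.2 (Nat.factorial_ne_zero m)
    apply mul_left_cancel₀ hfac
    calc (m.factorial : ℝ) *
        ∑ j : Fin (m + 1), (-1 : ℝ) ^ (j : ℕ) * f ((v ∘ ⇑σ) ∘ Fin.succAbove j)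
        = ∑ π : Equiv.Perm (Fin (m + 1)),
            ((Equiv.Perm.sign π : ℤ) : ℝ) * f ((v ∘ ⇑σ) ∘ ⇑π ∘ Fin.succ) :=
          cobound_symmetrize f hf (v ∘ ⇑σ)
      _ = ∑ π : Equiv.Perm (Fin (m + 1)), ((Equiv.Perm.sign σ : ℤ) : ℝ) *
            (((Equiv.Perm.sign (σ * π) : ℤ) : ℝ) * f (v ∘ ⇑(σ * π) ∘ Fin.succ)) := by
          refine Finset.sum_congr rfl fun π _ => ?_
          have harg : (v ∘ ⇑σ) ∘ ⇑π ∘ Fin.succ = v ∘ ⇑(σ * π) ∘ Fin.succ := rfl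
          rw [harg, sign_mul_cast]
          rcases Int.units_eq_one_or (Equiv.Perm.sign σ) with h | h <;>
            rw [h] <;> push_cast <;> ring
      _ = ∑ ρ : Equiv.Perm (Fin (m + 1)), ((Equiv.Perm.sign σ : ℤ) : ℝ) *
            (((Equiv.Perm.sign ρ : ℤ) : ℝ) * f (v ∘ ⇑ρ ∘ Fin.succ)) :=
          Equiv.sum_comp (Equiv.mulLeft σ) (fun ρ => ((Equiv.Perm.sign σ : ℤ) : ℝ) *
            (((Equiv.Perm.sign ρ : ℤ) : ℝ) * f (v ∘ ⇑ρ ∘ Fin.succ)))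
      _ = ((Equiv.Perm.sign σ : ℤ) : ℝ) * ∑ ρ : Equiv.Perm (Fin (m + 1)),
            ((Equiv.Perm.sign ρ : ℤ) : ℝ) * f (v ∘ ⇑ρ ∘ Fin.succ) := by
          rw [Finset.mul_sum]
      _ = ((Equiv.Perm.sign σ : ℤ) : ℝ) * ((m.factorial : ℝ) *
            ∑ j : Fin (m + 1), (-1 : ℝ) ^ (j : ℕ) * f (v ∘ Fin.succAbove j)) := by
          rw [cobound_symmetrize f hf v]
      _ = (m.factorial : ℝ) * (((Equiv.Perm.sign σ : ℤ) : ℝ) *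
            ∑ j : Fin (m + 1), (-1 : ℝ) ^ (j : ℕ) * f (v ∘ Fin.succAbove j)) := by
          ring
  · have hvσ : ¬ Function.Injective (v ∘ ⇑σ) := by
      intro hc
      apply hv
      have : (v ∘ ⇑σ) ∘ ⇑σ.symm = v := by
        funext x
        simp
      rw [← this]
      exact hc.comp σ.symm.injective
    rw [cobound_not_inj _ _ hvσ, cobound_not_inj _ _ hv, mul_zero]

lemma cobound_isCochain {m : ℕ} (f : (Fin m → V) → ℝ) (hf : Alternating f) :
    IsCochain (fullC V) (m + 1) (cobound (fullC V) f) := by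
  refine ⟨cobound_alternating f hf, fun v hv => ?_⟩
  rw [cobound, if_neg hv]

lemma cons_comp_liftPerm {m : ℕ} (x : V) (s : Fin m → V) (σ : Equiv.Perm (Fin m)) :
    Fin.cons x (s ∘ ⇑σ) =
      (Fin.cons x s : Fin (m + 1) → V) ∘ ⇑(Equiv.Perm.decomposeFin.symm (0, σ)) := by
  funext l
  refine Fin.cases ?_ ?_ l
  · simp [Equiv.Perm.decomposeFin_symm_apply_zero]
  · intro r
    simp [Equiv.Perm.decomposeFin_symm_apply_succ]

lemma codiff_alternating (n : ℕ) (hcard : Fintype.card V = n + 1) {m : ℕ}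
    (g : (Fin (m + 1) → V) → ℝ) (hg : Alternating g) :
    Alternating (codiff (fullC V) n g) := by
  intro σ s
  rw [codiff_apply n hcard, codiff_apply n hcard, Finset.mul_sum]
  refine Finset.sum_congr rfl fun x _ => ?_
  rw [cons_comp_liftPerm x s σ]
  have hinj : Function.Injective ((Fin.cons x s : Fin (m + 1) → V) ∘
      ⇑(Equiv.Perm.decomposeFin.symm (0, σ))) ↔ Function.Injective (Fin.cons x s) := by
    constructor
    · intro hc
      have heq : ((Fin.cons x s : Fin (m + 1) → V) ∘ ⇑(Equiv.Perm.decomposeFin.symm (0, σ))) ∘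
          ⇑(Equiv.Perm.decomposeFin.symm (0, σ)).symm = Fin.cons x s := by
        funext l
        simp
      rw [← heq]
      exact hc.comp (Equiv.Perm.decomposeFin.symm (0, σ)).symm.injective
    · exact fun hc => hc.comp (Equiv.Perm.decomposeFin.symm (0, σ)).injective
  by_cases hc : Function.Injective (Fin.cons x s)
  · rw [if_pos (hinj.2 hc), if_pos hc, hg (Equiv.Perm.decomposeFin.symm (0, σ))]
    have hsgn : Equiv.Perm.sign (Equiv.Perm.decomposeFin.symm (0, σ)) = Equiv.Perm.sign σ := by
      rw [Equiv.Perm.decomposeFin.symm_sign, if_pos rfl, one_mul]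
    rw [hsgn]
  · rw [if_neg (fun h => hc (hinj.1 h)), if_neg hc, mul_zero]

lemma codiff_isCochain (n : ℕ) (hcard : Fintype.card V = n + 1) {m : ℕ}
    (g : (Fin (m + 2) → V) → ℝ) (hg : Alternating g) :
    IsCochain (fullC V) (m + 1) (codiff (fullC V) n g) := by
  refine ⟨codiff_alternating n hcard g hg, fun s hs => ?_⟩
  rw [codiff_apply n hcard]
  apply Finset.sum_eq_zero
  intro x _
  rw [if_neg]
  intro hc
  apply hs
  rw [allowed_fullC]
  have : s = Fin.cons x s ∘ Fin.succ := by
    funext k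
    simp
  rw [this]
  exact hc.comp (Fin.succ_injective _)

lemma cons_cons_swap {m : ℕ} (x y : V) (s : Fin m → V) :
    Fin.cons y (Fin.cons x s) =
      (Fin.cons x (Fin.cons y s) : Fin (m + 2) → V) ∘ ⇑(Equiv.swap (0 : Fin (m + 2)) 1) := by
  funext l
  refine Fin.cases ?_ ?_ l
  · simp [Equiv.swap_apply_left]
  · intro r
    refine Fin.cases ?_ ?_ r
    · have h1 : ((0 : Fin (m + 1)).succ : Fin (m + 2)) = 1 := rfl
      rw [h1]
      simp [Equiv.swap_apply_right]
    · intro r2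
      have hne1 : (r2.succ.succ : Fin (m + 2)) ≠ 0 := Fin.succ_ne_zero _
      have hne2 : (r2.succ.succ : Fin (m + 2)) ≠ 1 := by
        simp [Fin.ext_iff]
      rw [Function.comp_apply, Equiv.swap_apply_of_ne_of_ne hne1 hne2]
      simp

lemma codiff_codiff (n : ℕ) (hcard : Fintype.card V = n + 1) {m : ℕ}
    (g : (Fin (m + 2) → V) → ℝ) (hg : Alternating g) :
    codiff (fullC V) n (codiff (fullC V) n g) = fun _ => 0 := by
  funext s
  rw [codiff_apply n hcard]
  set T : V → V → ℝ := fun x y =>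
    if Function.Injective (Fin.cons y (Fin.cons x s)) then g (Fin.cons y (Fin.cons x s)) else 0
    with hT
  have hstep : ∀ x : V, (if Function.Injective (Fin.cons x s) then
      codiff (fullC V) n g (Fin.cons x s) else 0) = ∑ y : V, T x y := by
    intro x
    by_cases hx : Function.Injective (Fin.cons x s)
    · rw [if_pos hx, codiff_apply n hcard]
    · rw [if_neg hx]
      symm
      apply Finset.sum_eq_zero
      intro y _
      rw [hT]
      simp only
      rw [if_neg]
      intro hc
      apply hx
      have : Fin.cons x s = Fin.cons y (Fin.cons x s) ∘ Fin.succ := by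
        funext k
        simp
      rw [this]
      exact hc.comp (Fin.succ_injective _)
  rw [Finset.sum_congr rfl (fun x _ => hstep x)]
  have hanti : ∀ x y : V, T x y = - T y x := by
    intro x y
    rw [hT]
    simp only
    rw [cons_cons_swap x y s]
    have hinj : Function.Injective ((Fin.cons x (Fin.cons y s) : Fin (m + 2) → V) ∘
        ⇑(Equiv.swap (0 : Fin (m + 2)) 1)) ↔
        Function.Injective (Fin.cons x (Fin.cons y s)) := by
      constructor
      · intro hc
        have heq : ((Fin.cons x (Fin.cons y s) : Fin (m + 2) → V) ∘
            ⇑(Equiv.swap (0 : Fin (m + 2)) 1)) ∘ ⇑(Equiv.swap (0 : Fin (m + 2)) 1) =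
            Fin.cons x (Fin.cons y s) := by
          funext l
          simp
        rw [← heq]
        exact hc.comp (Equiv.swap _ _).injective
      · exact fun hc => hc.comp (Equiv.swap _ _).injective
    by_cases hc : Function.Injective (Fin.cons x (Fin.cons y s))
    · rw [if_pos (hinj.2 hc), if_pos hc, hg (Equiv.swap (0 : Fin (m + 2)) 1)]
      have h01 : (0 : Fin (m + 2)) ≠ 1 := by simp [Fin.ext_iff]
      rw [Equiv.Perm.sign_swap h01]
      push_cast
      ring
    · rw [if_neg (fun h => hc (hinj.1 h)), if_neg hc, neg_zero]
  have hS : ∑ x : V, ∑ y : V, T x y = - ∑ x : V, ∑ y : V, T x y := by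
    conv_lhs => rw [Finset.sum_comm]
    rw [← Finset.sum_neg_distrib]
    refine Finset.sum_congr rfl fun x _ => ?_
    rw [← Finset.sum_neg_distrib]
    refine Finset.sum_congr rfl fun y _ => ?_
    rw [hanti y x]
  linarith [hS]

end Preserve
section Linear

variable [Fintype V] [DecidableEq V]

lemma cobound_linear {m : ℕ} (a b : ℝ) (f g : (Fin m → V) → ℝ) :
    cobound (fullC V) (fun v => a * f v + b * g v)
      = fun v => a * cobound (fullC V) f v + b * cobound (fullC V) g v := by
  funext v
  rw [cobound, cobound, cobound]
  by_cases h : Allowed (fullC V) v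
  · rw [if_pos h, if_pos h, if_pos h, Finset.mul_sum, Finset.mul_sum,
      ← Finset.sum_add_distrib]
    refine Finset.sum_congr rfl fun j _ => ?_
    ring
  · rw [if_neg h, if_neg h, if_neg h]
    ring

lemma cobound_smul {m : ℕ} (a : ℝ) (f : (Fin m → V) → ℝ) :
    cobound (fullC V) (fun v => a * f v) = fun v => a * cobound (fullC V) f v := by
  funext v
  rw [cobound, cobound]
  by_cases h : Allowed (fullC V) v
  · rw [if_pos h, if_pos h, Finset.mul_sum]
    refine Finset.sum_congr rfl fun j _ => ?_
    ring
  · rw [if_neg h, if_neg h]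
    ring

lemma codiff_smul (n : ℕ) (hcard : Fintype.card V = n + 1) {m : ℕ} (a : ℝ)
    (f : (Fin (m + 1) → V) → ℝ) :
    codiff (fullC V) n (fun v => a * f v) = fun s => a * codiff (fullC V) n f s := by
  funext s
  rw [codiff_apply n hcard, codiff_apply n hcard, Finset.mul_sum]
  refine Finset.sum_congr rfl fun x _ => ?_
  split_ifs <;> ring

end Linear

theorem full_simplex_eigenvalues'
    [Fintype V] [DecidableEq V] (n : ℕ) (hn : 1 ≤ n)
    (hcard : Fintype.card V = n + 1)
    (i : ℕ) (hi : i + 1 ≤ n) (c : ℝ) :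
    IsEigen (fullC V) n (i + 1) c ↔ c = 0 ∨ c = (n : ℝ) + 1 := by
  set K := fullC V with hK
  constructor
  · rintro ⟨f, hf0, hfc, hlap⟩
    obtain ⟨s0, hs0⟩ : ∃ s, f s ≠ 0 := by
      by_contra h
      push_neg at h
      exact hf0 (funext fun s => h s)
    have hsmul : c • f = fun v => c * f v := rfl
    -- Hodge applied to f
    have e1 : lap K n f = fun s => ((n : ℝ) + 1) * f s + (-1) * cobound K (codiff K n f) s := by
      funext s
      have hh := hodge n hcard f hfc s
      show codiff K n (cobound K f) s = _
      linarith
    have e2 : cobound K (lap K n f) = fun v => ((n : ℝ) + 1) * cobound K f v := by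
      rw [e1, cobound_linear]
      funext v
      rw [show cobound K (cobound K (codiff K n f)) = fun _ => 0 from dd_zero _]
      ring
    have e3 : lap K n (lap K n f) = fun s => ((n : ℝ) + 1) * lap K n f s := by
      show codiff K n (cobound K (lap K n f)) = _
      rw [e2, codiff_smul n hcard]
      rfl
    have e4 : lap K n (lap K n f) = fun s => c * (c * f s) := by
      conv_lhs => rw [hlap, hsmul]
      show codiff K n (cobound K (fun v => c * f v)) = _
      rw [cobound_smul, codiff_smul n hcard]
      funext s
      have : codiff K n (cobound K f) s = c * f s := by
        have := congrFun hlap s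
        rw [hsmul] at this
        exact this
      rw [this]
    have e5 : ((n : ℝ) + 1) * (c * f s0) = c * (c * f s0) := by
      have h3 := congrFun e3 s0
      have h4 := congrFun e4 s0
      have h5 : lap K n f s0 = c * f s0 := by
        have := congrFun hlap s0
        rw [hsmul] at this
        exact this
      rw [h4] at h3
      rw [h5] at h3
      linarith
    have e6 : c * (c - ((n : ℝ) + 1)) = 0 := by
      have := mul_right_cancel₀ hs0 (show (((n : ℝ) + 1) * c) * f s0 = (c * c) * f s0 by
        rw [mul_assoc, mul_assoc]; exact e5)
      nlinarith [this]
    rcases mul_eq_zero.mp e6 with h | h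
    · exact Or.inl h
    · right
      linarith [sub_eq_zero.mp h]
  · intro hc
    rcases hc with hc | hc
    · -- eigenvalue 0 : f = d (basic cochain on an i-tuple)
      subst hc
      obtain ⟨e⟩ : Nonempty (Fin i ↪ V) := by
        apply Function.Embedding.nonempty_of_card_le
        simp only [Fintype.card_fin, hcard]
        omega
      have ht : Function.Injective ⇑e := e.injective
      have hx' : ∃ x : V, x ∉ Finset.image ⇑e Finset.univ := by
        have hlt : (Finset.image ⇑e Finset.univ).card < Fintype.card V := by
          rw [Finset.card_image_of_injective _ ht, Finset.card_univ, Fintype.card_fin, hcard]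
          omega
        have hpos : 0 < (Finset.univ \ Finset.image ⇑e Finset.univ).card := by
          rw [Finset.card_sdiff_of_subset (Finset.subset_univ _), Finset.card_univ]
          exact Nat.sub_pos_of_lt hlt
        obtain ⟨x, hx⟩ := Finset.card_pos.mp hpos
        exact ⟨x, (Finset.mem_sdiff.mp hx).2⟩
      obtain ⟨x, hx⟩ := hx'
      refine ⟨cobound K (basicC ⇑e), ?_, ?_, ?_⟩
      · -- nonzero
        have hinj : Function.Injective (Fin.cons x ⇑e) := (cons_inj_iff ht x).2 hx
        have hval : cobound K (basicC ⇑e) (Fin.cons x ⇑e) = 1 := by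
          rw [cobound_apply _ _ hinj, Fintype.sum_eq_single (0 : Fin (i + 1))]
          · rw [cons_comp_succAbove_zero, basicC_self ht]
            simp
          · intro j hj
            have hiPos : 0 < i := by
              have := (j.pred hj).isLt
              omega
            set z : Fin i := ⟨0, hiPos⟩ with hz
            have hw : (Fin.cons x ⇑e : Fin (i + 1) → V) (Fin.succAbove j z) = x := by
              have hsz : Fin.succAbove j z = 0 := by
                apply Fin.ext
                rw [val_succAbove]
                have hj0 : 0 < (j : ℕ) := by
                  rcases Nat.eq_zero_or_pos (j : ℕ) with h | h
                  · exact absurd (Fin.ext h) hj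
                  · exact h
                simp [hz, hj0]
              rw [hsz, Fin.cons_zero]
            rw [basicC_eq_zero, mul_zero]
            intro σ hcσ
            have hcontr := congrFun hcσ (σ.symm z)
            simp only [Function.comp_apply, Equiv.apply_symm_apply] at hcontr
            rw [hw] at hcontr
            apply hx
            rw [hcontr]
            exact Finset.mem_image_of_mem ⇑e (Finset.mem_univ (σ.symm z))
        intro hzero
        rw [hzero] at hval
        simp at hval
      · exact cobound_isCochain _ (fun σ v => altC_alternating _ σ v)
      · rw [show lap K n (cobound K (basicC ⇑e))
            = codiff K n (cobound K (cobound K (basicC ⇑e))) from rfl,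
          dd_zero, codiff_zero, zero_smul]
        rfl
    · -- eigenvalue n + 1 : f = δ (basic cochain on an (i+2)-tuple)
      subst hc
      obtain ⟨e⟩ : Nonempty (Fin (i + 2) ↪ V) := by
        apply Function.Embedding.nonempty_of_card_le
        simp only [Fintype.card_fin, hcard]
        omega
      set u : Fin (i + 2) → V := ⇑e with hu
      have hui : Function.Injective u := e.injective
      have halt : Alternating (basicC u) := fun σ v => altC_alternating _ σ v
      have hc1 : IsCochain (fullC V) (i + 1) (codiff (fullC V) n (basicC u)) :=
        codiff_isCochain n hcard _ halt
      refine ⟨codiff K n (basicC u), ?_, hc1, ?_⟩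
      · -- nonzero
        have hval : codiff K n (basicC u) (u ∘ Fin.succ) = 1 := by
          rw [codiff_apply n hcard]
          have hterm : ∀ x : V,
              (if Function.Injective (Fin.cons x (u ∘ Fin.succ)) then
                basicC u (Fin.cons x (u ∘ Fin.succ)) else 0)
                = if x = u 0 then (1 : ℝ) else 0 := by
            intro x
            by_cases hx0 : x = u 0
            · have hcons : Fin.cons x (u ∘ Fin.succ) = u := by
                subst hx0
                funext l
                refine Fin.cases ?_ ?_ l
                · rw [Fin.cons_zero]
                · intro r
                  rw [Fin.cons_succ, Function.comp_apply]
              rw [hcons, if_pos hui, basicC_self hui, if_pos hx0]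
            · rw [if_neg hx0]
              by_cases hxr : ∃ k : Fin (i + 1), u k.succ = x
              · obtain ⟨k, hk⟩ := hxr
                have hninj : ¬ Function.Injective (Fin.cons x (u ∘ Fin.succ)) := by
                  intro hcinj
                  have h1 : (Fin.cons x (u ∘ Fin.succ) : Fin (i + 2) → V) 0 = x := by simp
                  have h2 : (Fin.cons x (u ∘ Fin.succ) : Fin (i + 2) → V) k.succ = x := by
                    rw [Fin.cons_succ]
                    exact hk
                  have h3 := hcinj (h1.trans h2.symm)
                  exact (Fin.succ_ne_zero k) h3.symm
                rw [if_neg hninj]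
              · push_neg at hxr
                have hnever : ∀ σ : Equiv.Perm (Fin (i + 2)),
                    Fin.cons x (u ∘ Fin.succ) ∘ ⇑σ ≠ u := by
                  intro σ hcσ
                  have hth := congrFun hcσ (σ.symm 0)
                  simp only [Function.comp_apply, Equiv.apply_symm_apply] at hth
                  rw [Fin.cons_zero] at hth
                  rcases Fin.eq_zero_or_eq_succ (σ.symm 0) with h | ⟨k, hk⟩
                  · rw [h] at hth
                    exact hx0 hth
                  · rw [hk] at hth
                    exact hxr k hth.symm
                rw [basicC_eq_zero hnever, ite_self]
          rw [Finset.sum_congr rfl (fun x _ => hterm x),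
            Finset.sum_ite_eq' Finset.univ (u 0) (fun _ => (1 : ℝ))]
          simp
        intro hzero
        rw [hzero] at hval
        simp at hval
      · -- eigen equation
        have hδδ : codiff (fullC V) n (codiff (fullC V) n (basicC u)) = fun _ => 0 :=
          codiff_codiff n hcard _ halt
        funext s
        have hh := hodge n hcard (codiff (fullC V) n (basicC u)) hc1 s
        rw [hδδ, cobound_zero] at hh
        have hl : lap K n (codiff K n (basicC u)) s
            = codiff K n (cobound K (codiff K n (basicC u))) s := rfl
        have hr : (((n : ℝ) + 1) • codiff K n (basicC u)) s
            = ((n : ℝ) + 1) * codiff K n (basicC u) s := rfl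
        rw [hl, hr]
        simpa using hh


/-- for the full `n`-simplex (`n ≥ 1`), i.e. the complex of all nonempty
subsets of an `(n+1)`-element vertex set, and any `0 ≤ i ≤ n-1`, the set of eigenvalues
of `Δ` on `C^i(X)` is exactly `{0, n+1}`. -/
theorem full_simplex_eigenvalues
    [Fintype V] [DecidableEq V] (n : ℕ) (hn : 1 ≤ n)
    (hcard : Fintype.card V = n + 1)
    (i : ℕ) (hi : i + 1 ≤ n) (c : ℝ) :
    IsEigen (Finset.univ.filter fun s : Finset V => s.Nonempty) n (i + 1) c
      ↔ c = 0 ∨ c = (n : ℝ) + 1 := by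
  exact full_simplex_eigenvalues' n hn hcard i hi c
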